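/- The tree Wasserstein distance W₁ᵗ(μ,ν) = ∑_{v ∈ V} t(v, p(v)) |μ(T_v) − ν(T_v)| defines a metric on the set of probability distributions supported on the leaves of a finite weighted rooted tree T: it is nonnegative, symmetric, satisfies the triangle inequality, and vanishes iff μ = ν. -/
import Mathlib


open scoped Classical

/-- `z` is an ancestor of `u` for the parent map `p`. -/
def Desc {V : Type*} (p : V → V) (z u : V) : Prop := ∃ k, p^[k] u = z

/-- Total mass placed by `μ` on the subtree rooted at `v`. -/
noncomputable def subtreeMass {V : Type*} [Fintype V] (p : V → V) (μ : V → ℝ) (v : V) : ℝ :=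
  ∑ u, if Desc p v u then μ u else 0

/-- The tree Wasserstein distance `∑_v t(v, p v) |μ(T_v) − ν(T_v)|`. -/
noncomputable def TWD {V : Type*} [Fintype V] (p : V → V) (w : V → ℝ) (μ ν : V → ℝ) : ℝ :=
  ∑ v, w v * |subtreeMass p μ v - subtreeMass p ν v|

/-- `v` is a leaf of the tree with parent map `p`: no other node has `v` as parent. -/
def IsLeaf {V : Type*} (p : V → V) (v : V) : Prop := ∀ u, p u = v → u = v

lemma desc_leaf {V : Type*} {p : V → V} {v : V} (hv : IsLeaf p v) :
    ∀ k (u : V), p^[k] u = v → u = v := by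
  intro k
  induction k with
  | zero => intro u h; simpa using h
  | succ n ih =>
    intro u h
    rw [Function.iterate_succ_apply] at h
    exact hv u (ih (p u) h)

lemma subtreeMass_leaf {V : Type*} [Fintype V] {p : V → V} {v : V} (hv : IsLeaf p v)
    (μ : V → ℝ) : subtreeMass p μ v = μ v := by
  unfold subtreeMass
  have : ∀ u : V, Desc p v u ↔ u = v := by
    intro u
    constructor
    · rintro ⟨k, hk⟩; exact desc_leaf hv k u hk
    · rintro rfl; exact ⟨0, rfl⟩
  simp only [this]
  simp

/-- The tree Wasserstein distance is a metric on probability distributions supported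
on the leaves of a finite weighted rooted tree: nonnegative, symmetric, satisfies
the triangle inequality, and vanishes iff the distributions coincide. -/
theorem stmt_5 {V : Type*} [Fintype V] (p : V → V) (w : V → ℝ) (r : V)
    (hroot : p r = r) (hreach : ∀ v, ∃ k, p^[k] v = r)
    (hw : ∀ v, v ≠ r → 0 < w v) (hwr : w r = 0)
    (μ ν ρ : V → ℝ)
    (hμ0 : ∀ v, 0 ≤ μ v) (hν0 : ∀ v, 0 ≤ ν v) (hρ0 : ∀ v, 0 ≤ ρ v)
    (hμ1 : ∑ v, μ v = 1) (hν1 : ∑ v, ν v = 1) (hρ1 : ∑ v, ρ v = 1)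
    (hμleaf : ∀ v, μ v ≠ 0 → IsLeaf p v)
    (hνleaf : ∀ v, ν v ≠ 0 → IsLeaf p v)
    (hρleaf : ∀ v, ρ v ≠ 0 → IsLeaf p v) :
    0 ≤ TWD p w μ ν ∧
    TWD p w μ ν = TWD p w ν μ ∧
    TWD p w μ ρ ≤ TWD p w μ ν + TWD p w ν ρ ∧
    (TWD p w μ ν = 0 ↔ μ = ν) := by
  have hw0 : ∀ v, 0 ≤ w v := by
    intro v
    by_cases h : v = r
    · rw [h, hwr]
    · exact (hw v h).le
  have hterm : ∀ (a b : V → ℝ), ∀ v, 0 ≤ w v * |subtreeMass p a v - subtreeMass p b v| :=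
    fun a b v => mul_nonneg (hw0 v) (abs_nonneg _)
  refine ⟨Finset.sum_nonneg fun v _ => hterm μ ν v, ?_, ?_, ?_⟩
  · unfold TWD
    congr 1; funext v; rw [abs_sub_comm]
  · unfold TWD
    rw [← Finset.sum_add_distrib]
    apply Finset.sum_le_sum
    intro v _
    rw [← mul_add]
    exact mul_le_mul_of_nonneg_left (abs_sub_le _ _ _) (hw0 v)
  · constructor
    · intro h0
      have hz : ∀ v ∈ Finset.univ, w v * |subtreeMass p μ v - subtreeMass p ν v| = 0 := by
        rw [← Finset.sum_eq_zero_iff_of_nonneg (fun v _ => hterm μ ν v)]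
        exact h0
      have heq : ∀ v, v ≠ r → μ v = ν v := by
        intro v hv
        by_cases hl : IsLeaf p v
        · have := hz v (Finset.mem_univ v)
          have habs : |subtreeMass p μ v - subtreeMass p ν v| = 0 := by
            rcases mul_eq_zero.mp this with h | h
            · exact absurd h (ne_of_gt (hw v hv))
            · exact h
          have : subtreeMass p μ v = subtreeMass p ν v := by
            have := abs_eq_zero.mp habs; linarith
          rwa [subtreeMass_leaf hl μ, subtreeMass_leaf hl ν] at this
        · have h1 : μ v = 0 := by
            by_contra hc; exact hl (hμleaf v hc)
          have h2 : ν v = 0 := by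
            by_contra hc; exact hl (hνleaf v hc)
          rw [h1, h2]
      funext v
      by_cases hvr : v = r
      · subst hvr
        have h1 : ∑ u ∈ Finset.univ.erase v, μ u + μ v = 1 := by
          rw [Finset.sum_erase_add _ _ (Finset.mem_univ v)]; exact hμ1
        have h2 : ∑ u ∈ Finset.univ.erase v, ν u + ν v = 1 := by
          rw [Finset.sum_erase_add _ _ (Finset.mem_univ v)]; exact hν1
        have h3 : ∑ u ∈ Finset.univ.erase v, μ u = ∑ u ∈ Finset.univ.erase v, ν u :=
          Finset.sum_congr rfl fun u hu => heq u (Finset.mem_erase.mp hu).1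
        linarith
      · exact heq v hvr
    · rintro rfl
      unfold TWD
      simp
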